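/- If h is a doubling dimension function with liminf_n N^n h(κ R_n) > 0, then ℋ^h(C_{s,𝒟}) > 0. -/

import Mathlib

open MeasureTheory
open scoped ENNReal

section Aux

open TopologicalSpace

noncomputable def myK (N : ℕ) [NeZero N] : PositiveCompacts (ℕ → Fin N) :=
  ⟨⟨Set.univ, isCompact_univ⟩, by simp⟩

noncomputable def myHaar (N : ℕ) [NeZero N] : Measure (ℕ → Fin N) :=
  Measure.addHaarMeasure (myK N)

instance (N : ℕ) [NeZero N] : (myHaar N).IsAddLeftInvariant := by
  unfold myHaar; infer_instance

def cyl (N : ℕ) [NeZero N] (n : ℕ) (b : Fin n → Fin N) : Set (ℕ → Fin N) :=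
  {σ | ∀ i : Fin n, σ i = b i}

lemma cyl_isOpen (N : ℕ) [NeZero N] (n : ℕ) (b : Fin n → Fin N) : IsOpen (cyl N n b) := by
  have : cyl N n b = ⋂ i : Fin n, (fun σ : ℕ → Fin N => σ i) ⁻¹' {b i} := by
    ext σ; simp [cyl]
  rw [this]
  exact isOpen_iInter_of_finite fun i =>
    (continuous_apply (i : ℕ)).isOpen_preimage _ (isOpen_discrete _)

lemma cyl_meas (N : ℕ) [NeZero N] (n : ℕ) (b : Fin n → Fin N) : MeasurableSet (cyl N n b) :=
  (cyl_isOpen N n b).measurableSet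

lemma cyl_translate (N : ℕ) [NeZero N] (n : ℕ) (b : Fin n → Fin N) :
    myHaar N (cyl N n b) = myHaar N (cyl N n 0) := by
  classical
  set a : ℕ → Fin N := fun i => if h : i < n then b ⟨i, h⟩ else 0 with ha
  have : cyl N n b = (fun σ : ℕ → Fin N => σ + (-a)) ⁻¹' (cyl N n 0) := by
    ext σ
    simp only [cyl, Set.mem_preimage, Set.mem_setOf_eq, Pi.add_apply, Pi.neg_apply, Pi.zero_apply]
    constructor
    · intro hσ i
      rw [hσ i]; simp [ha, i.isLt]
    · intro hσ i
      have := hσ i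
      have h2 : a i = b i := by simp [ha, i.isLt]
      rw [h2] at this
      exact add_neg_eq_zero.mp this
  rw [this]
  exact measure_preimage_add_right (myHaar N) (-a) (cyl N n 0)

lemma myHaar_univ (N : ℕ) [NeZero N] : myHaar N Set.univ = 1 := by
  simpa [myHaar, myK] using Measure.addHaarMeasure_self (K₀ := myK N)

lemma cyl_measure (N : ℕ) [NeZero N] (n : ℕ) (b : Fin n → Fin N) :
    myHaar N (cyl N n b) = ((N : ℝ≥0∞) ^ n)⁻¹ := by
  classical
  have hdisj : Pairwise (Function.onFun Disjoint fun b : Fin n → Fin N => cyl N n b) := by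
    intro b₁ b₂ hne
    rw [Function.onFun, Set.disjoint_left]
    rintro σ h1 h2
    exact hne (funext fun i => by rw [← h1 i, ← h2 i])
  have hcover : ⋃ b : Fin n → Fin N, cyl N n b = Set.univ := by
    ext σ; simp only [Set.mem_iUnion, Set.mem_univ, iff_true]
    exact ⟨fun i => σ i, fun i => rfl⟩
  have hsum : ∑' b : Fin n → Fin N, myHaar N (cyl N n b) = 1 := by
    rw [← measure_iUnion hdisj (fun b => cyl_meas N n b), hcover, myHaar_univ]
  have heq : ∀ b : Fin n → Fin N, myHaar N (cyl N n b) = myHaar N (cyl N n 0) :=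
    fun b => cyl_translate N n b
  rw [tsum_congr heq, tsum_fintype] at hsum
  rw [Finset.sum_const, Finset.card_univ, Fintype.card_fun, Fintype.card_fin, Fintype.card_fin,
    nsmul_eq_mul] at hsum
  push_cast at hsum
  have hN0 : ((N : ℝ≥0∞) ^ n) ≠ 0 := by simp [pow_ne_zero, NeZero.ne N]
  have hNt : ((N : ℝ≥0∞) ^ n) ≠ ∞ := by simp [ENNReal.pow_ne_top, ENNReal.natCast_ne_top]
  rw [cyl_translate N n b, ← one_mul ((myHaar N) (cyl N n 0)), ← ENNReal.inv_mul_cancel hN0 hNt,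
    mul_assoc, hsum, mul_one]

lemma iter_dbl (h : ℝ → ℝ) (c : ℝ) (hc : 0 ≤ c) (hdbl : ∀ x > 0, h (2 * x) ≤ c * h x) :
    ∀ (k : ℕ) (x : ℝ), 0 < x → h (2 ^ k * x) ≤ c ^ k * h x := by
  intro k
  induction k with
  | zero => intro x hx; simp
  | succ k ih =>
    intro x hx
    have h1 : h (2 ^ (k + 1) * x) = h (2 * (2 ^ k * x)) := by ring_nf
    have h2 : h (2 * (2 ^ k * x)) ≤ c * h (2 ^ k * x) :=
      hdbl _ (by positivity)
    have h3 : c * h (2 ^ k * x) ≤ c * (c ^ k * h x) :=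
      mul_le_mul_of_nonneg_left (ih x hx) hc
    calc h (2 ^ (k + 1) * x) ≤ c * h (2 ^ k * x) := h1 ▸ h2
      _ ≤ c * (c ^ k * h x) := h3
      _ = c ^ (k + 1) * h x := by ring

end Aux

set_option maxHeartbeats 1000000 in
lemma sep_general {E : Type*} [NormedAddCommGroup E] [NormedSpace ℝ E] [CompleteSpace E] [T2Space E]
    (N : ℕ) (s : ℕ → ℝ) (hs : ∀ n, 0 < s n) (hsum : Summable s)
    (d : ℕ → Fin N → E) (κ τ : ℝ) (hκpos : 0 ≤ κ)
    (hdd : ∀ (n : ℕ) (i j : Fin N), ‖d n i - d n j‖ ≤ κ)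
    (hτd : ∀ (n : ℕ) (i j : Fin N), i ≠ j → τ ≤ ‖d n i - d n j‖)
    (R : ℕ → ℝ) (hR : ∀ n, R n = ∑' i, s (n + i))
    (M : ℝ) (hsep : ∀ n, κ * R (n + 1) ≤ M * (τ * s n))
    (hsm : ∀ σ : ℕ → Fin N, Summable fun i => s i • d i (σ i))
    (σ σ' : ℕ → Fin N) (m : ℕ) (hag : ∀ i, i < m → σ i = σ' i) (hne : σ m ≠ σ' m) :
    (1 - M) * (τ * s m) ≤ ‖(∑' i, s i • d i (σ i)) - ∑' i, s i • d i (σ' i)‖ := by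
  have hgb : ∀ (σ σ' : ℕ → Fin N) (i : ℕ),
      ‖s i • d i (σ i) - s i • d i (σ' i)‖ ≤ s i * κ := by
    intro σ σ' i
    rw [← smul_sub, norm_smul, Real.norm_of_nonneg (hs i).le]
    exact mul_le_mul_of_nonneg_left (hdd i (σ i) (σ' i)) (hs i).le
  have hgsum : ∀ (σ σ' : ℕ → Fin N),
      Summable fun i => s i • d i (σ i) - s i • d i (σ' i) :=
    fun σ σ' => (hsm σ).sub (hsm σ')
  have hgnsum : ∀ (σ σ' : ℕ → Fin N),
      Summable fun i => ‖s i • d i (σ i) - s i • d i (σ' i)‖ := by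
    intro σ σ'
    exact Summable.of_nonneg_of_le (fun i => norm_nonneg _) (hgb σ σ')
      (hsum.mul_right κ)
  set g : ℕ → E :=
    fun i => s i • d i (σ i) - s i • d i (σ' i) with hg
  have hFd : (∑' i, s i • d i (σ i)) - ∑' i, s i • d i (σ' i) = ∑' i, g i :=
    (Summable.tsum_sub (hsm σ) (hsm σ')).symm
  have hsplit : (∑ i ∈ Finset.range (m + 1), g i) + ∑' i, g (i + (m + 1)) = ∑' i, g i :=
    Summable.sum_add_tsum_nat_add (m + 1) (hgsum σ σ')
  have hhead : (∑ i ∈ Finset.range (m + 1), g i) = g m := by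
    apply Finset.sum_eq_single_of_mem m (Finset.self_mem_range_succ m)
    intro i hi hne'
    have hilt : i < m := by
      have := Finset.mem_range.mp hi; omega
    simp [hg, hag i hilt]
  have hgm : τ * s m ≤ ‖g m‖ := by
    rw [hg]
    simp only [← smul_sub, norm_smul, Real.norm_of_nonneg (hs m).le]
    rw [mul_comm]
    exact mul_le_mul_of_nonneg_left (hτd m _ _ hne) (hs m).le
  have htail : ‖∑' i, g (i + (m + 1))‖ ≤ κ * R (m + 1) := by
    have h1 : ‖∑' i, g (i + (m + 1))‖ ≤ ∑' i, ‖g (i + (m + 1))‖ :=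
      norm_tsum_le_tsum_norm ((summable_nat_add_iff (f := fun i => ‖g i‖) (m + 1)).2 (hgnsum σ σ'))
    have h2 : ∑' i, ‖g (i + (m + 1))‖ ≤ ∑' i, s (i + (m + 1)) * κ :=
      Summable.tsum_le_tsum (fun i => hgb σ σ' _)
        ((summable_nat_add_iff (f := fun i => ‖g i‖) (m + 1)).2 (hgnsum σ σ'))
        ((summable_nat_add_iff (f := fun i => s i * κ) (m + 1)).2 (hsum.mul_right κ))
    have h3 : ∑' i, s (i + (m + 1)) * κ = R (m + 1) * κ := by
      rw [tsum_mul_right, hR]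
      congr 1
      exact tsum_congr fun i => by rw [add_comm]
    calc ‖∑' i, g (i + (m + 1))‖ ≤ ∑' i, ‖g (i + (m + 1))‖ := h1
      _ ≤ ∑' i, s (i + (m + 1)) * κ := h2
      _ = κ * R (m + 1) := by rw [h3, mul_comm]
  have hnorm : ‖g m‖ - ‖∑' i, g (i + (m + 1))‖ ≤
      ‖(∑' i, s i • d i (σ i)) - ∑' i, s i • d i (σ' i)‖ := by
    rw [hFd, ← hsplit, hhead]
    have := norm_add_le (g m + ∑' i, g (i + (m + 1))) (-(∑' i, g (i + (m + 1))))
    simp only [add_neg_cancel_right, norm_neg] at this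
    linarith
  have := hsep m
  linarith


set_option maxHeartbeats 2000000 in
/-- If `h` is a doubling dimension function with `liminf_n N^n h(κRₙ) > 0`,
then `ℋ^h(C_{s,𝒟}) > 0`.  Here `Rₙ = ∑_{i ≥ n} sᵢ` is the tail of the series after the
first `n` terms, and the separation condition `sup_n κRₙ₊₁/(τ sₙ) ≤ M < 1` holds. -/
theorem stmt_7 (p N : ℕ) (hN : 2 ≤ N)
    (s : ℕ → ℝ) (hs : ∀ n, 0 < s n) (hsum : Summable s)
    (d : ℕ → Fin N → EuclideanSpace ℝ (Fin p))
    (hzero : ∀ n, d n ⟨0, by omega⟩ = 0)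
    (κ τ : ℝ) (hτ : 0 < τ)
    (hκ : ∀ (n : ℕ) (i j : Fin N), i ≠ j → ‖d n i - d n j‖ ≤ κ)
    (hτd : ∀ (n : ℕ) (i j : Fin N), i ≠ j → τ ≤ ‖d n i - d n j‖)
    (R : ℕ → ℝ) (hR : ∀ n, R n = ∑' i, s (n + i))
    (M : ℝ) (hM : M < 1) (hsep : ∀ n, κ * R (n + 1) ≤ M * (τ * s n))
    (h : ℝ → ℝ) (hcont : Continuous h) (hmono : Monotone h) (h0 : h 0 = 0)
    (hnonneg : ∀ x, 0 ≤ h x)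
    (c : ℝ) (hdbl : ∀ x > 0, h (2 * x) ≤ c * h x)
    (hpos : 0 < Filter.atTop.liminf
      (fun n => (N : ℝ≥0∞) ^ n * ENNReal.ofReal (h (κ * R n)))) :
    0 < Measure.mkMetric (fun r : ℝ≥0∞ => ENNReal.ofReal (h r.toReal))
        (Set.range fun σ : ℕ → Fin N => ∑' i, s i • d i (σ i)) := by
  classical
  haveI : NeZero N := ⟨by omega⟩
  set F : (ℕ → Fin N) → EuclideanSpace ℝ (Fin p) := fun σ => ∑' i, s i • d i (σ i) with hF
  -- Basic positivity facts
  have hκτ : τ ≤ κ := by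
    have hne : (⟨0, by omega⟩ : Fin N) ≠ ⟨1, by omega⟩ := by simp [Fin.ext_iff]
    exact le_trans (hτd 0 _ _ hne) (hκ 0 _ _ hne)
  have hκpos : 0 < κ := lt_of_lt_of_le hτ hκτ
  -- summability of the shifted series, positivity of R
  have hsumsh : ∀ n, Summable fun i => s (n + i) := by
    intro n
    have := (summable_nat_add_iff n).2 hsum
    simpa [add_comm] using this
  have hRpos : ∀ n, 0 < R n := by
    intro n
    rw [hR]
    exact Summable.tsum_pos (hsumsh n) (fun i => (hs _).le) 0 (hs _)
  have hRsucc : ∀ n, R n = s n + R (n + 1) := by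
    intro n
    rw [hR, hR, Summable.tsum_eq_zero_add (hsumsh n)]
    congr 1
    exact tsum_congr fun i => by rw [show n + (i + 1) = n + 1 + i by ring]
  have hRanti : StrictAnti R := strictAnti_nat_of_succ_lt fun n => by
    have := hRsucc n; have := hs n; linarith
  have hMpos : 0 < M := by
    have h3 : 0 < M * (τ * s 0) := lt_of_lt_of_le (mul_pos hκpos (hRpos 1)) (hsep 0)
    rcases mul_pos_iff.mp h3 with ⟨h4, _⟩ | ⟨_, h5⟩
    · exact h4
    · nlinarith [mul_pos hτ (hs 0)]
  -- norm bound on digits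
  have hdb : ∀ n (j : Fin N), ‖d n j‖ ≤ κ := by
    intro n j
    by_cases hj : j = ⟨0, by omega⟩
    · rw [hj, hzero]; simpa using hκpos.le
    · have := hκ n j ⟨0, by omega⟩ hj
      rwa [hzero, sub_zero] at this
  have hdd : ∀ n (i j : Fin N), ‖d n i - d n j‖ ≤ κ := by
    intro n i j
    by_cases hij : i = j
    · rw [hij, sub_self, norm_zero]; exact hκpos.le
    · exact hκ n i j hij
  -- summability of the series defining F
  have hsm : ∀ σ : ℕ → Fin N, Summable fun i => s i • d i (σ i) := by
    intro σ
    apply Summable.of_norm_bounded (hsum.mul_right κ)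
    intro i
    rw [norm_smul, Real.norm_of_nonneg (hs i).le]
    exact mul_le_mul_of_nonneg_left (hdb i (σ i)) (hs i).le
  -- continuity of F
  have hFc : Continuous F := by
    apply continuous_tsum
    · intro i
      exact (Continuous.comp (continuous_of_discreteTopology) (continuous_apply i)).const_smul (s i)
    · exact hsum.mul_right κ
    · intro i σ
      rw [norm_smul, Real.norm_of_nonneg (hs i).le]
      exact mul_le_mul_of_nonneg_left (hdb i (σ i)) (hs i).le
  have hsepF : ∀ (σ σ' : ℕ → Fin N) (m : ℕ), (∀ i, i < m → σ i = σ' i) → σ m ≠ σ' m →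
      (1 - M) * (τ * s m) ≤ ‖F σ - F σ'‖ :=
    fun σ σ' m hag hne =>
      sep_general N s hs hsum d κ τ hκpos.le hdd hτd R hR M hsep hsm σ σ' m hag hne
  -- the Haar measure and its pushforward
  set ν := myHaar N with hνdef
  set μ := Measure.map F ν with hμdef
  have hFms : Measurable F := hFc.measurable
  have hrange : MeasurableSet (Set.range F) := (isCompact_range hFc).isClosed.measurableSet
  have hμrange : μ (Set.range F) = 1 := by
    rw [hμdef, Measure.map_apply hFms hrange, Set.preimage_range, hνdef, myHaar_univ]
  set c₀ : ℝ := (1 - M) * κ / M with hc₀def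
  have hc₀pos : 0 < c₀ := div_pos (mul_pos (by linarith) hκpos) hMpos
  have hchain : ∀ m n : ℕ, m ≤ n → c₀ * R (n + 1) ≤ (1 - M) * (τ * s m) := by
    intro m n hmn
    have h1 : κ * R (n + 1) ≤ κ * R (m + 1) :=
      mul_le_mul_of_nonneg_left (hRanti.antitone (by omega)) hκpos.le
    have h2 : κ * R (m + 1) ≤ M * (τ * s m) := hsep m
    rw [hc₀def, div_mul_eq_mul_div, div_le_iff₀ hMpos]
    nlinarith [mul_le_mul_of_nonneg_left (h1.trans h2) (by linarith : (0:ℝ) ≤ 1 - M)]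
  -- key measure estimate
  have hkey : ∀ (t : Set (EuclideanSpace ℝ (Fin p))) (n : ℕ),
      EMetric.diam t < ENNReal.ofReal (c₀ * R (n + 1)) → μ t ≤ ((N : ℝ≥0∞) ^ (n + 1))⁻¹ := by
    intro t n hd
    rcases (t ∩ Set.range F).eq_empty_or_nonempty with hemp | ⟨x, hxt, hxr⟩
    · have hsub : t ⊆ (Set.range F)ᶜ := fun y hy hy2 =>
        Set.eq_empty_iff_forall_notMem.mp hemp y ⟨hy, hy2⟩
      calc μ t ≤ μ (Set.range F)ᶜ := measure_mono hsub
        _ = ν (F ⁻¹' (Set.range F)ᶜ) := Measure.map_apply hFms hrange.compl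
        _ = 0 := by rw [Set.preimage_compl, Set.preimage_range, Set.compl_univ, measure_empty]
        _ ≤ _ := zero_le
    · obtain ⟨σ₀, hσ₀⟩ := hxr
      have hDne : EMetric.diam t ≠ ∞ := ne_top_of_lt hd
      have hDlt : (EMetric.diam t).toReal < c₀ * R (n + 1) :=
        (ENNReal.lt_ofReal_iff_toReal_lt hDne).mp hd
      have hsub : t ⊆ Metric.closedBall x (EMetric.diam t).toReal := by
        intro y hy
        rw [Metric.mem_closedBall, dist_edist]
        exact ENNReal.toReal_mono hDne (EMetric.edist_le_diam_of_mem hy hxt)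
      have hsub2 : F ⁻¹' Metric.closedBall x (EMetric.diam t).toReal ⊆
          cyl N (n + 1) (fun i => σ₀ i) := by
        intro σ hσ
        by_contra hcon
        simp only [cyl, Set.mem_setOf_eq] at hcon
        push_neg at hcon
        obtain ⟨i, hi⟩ := hcon
        have hex2 : ∃ k, σ k ≠ σ₀ k := ⟨i, hi⟩
        have hmne : σ (Nat.find hex2) ≠ σ₀ (Nat.find hex2) := Nat.find_spec hex2
        have hag : ∀ j, j < Nat.find hex2 → σ j = σ₀ j := fun j hj =>
          not_not.mp (Nat.find_min hex2 hj)
        have hmle : Nat.find hex2 ≤ n :=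
          le_trans (Nat.find_min' hex2 hi) (Nat.lt_succ_iff.mp i.isLt)
        have hs1 := hsepF σ σ₀ (Nat.find hex2) hag hmne
        have hs2 := hchain (Nat.find hex2) n hmle
        have hs3 : dist (F σ) (F σ₀) ≤ (EMetric.diam t).toReal := by
          rw [hσ₀]; exact Metric.mem_closedBall.mp hσ
        rw [dist_eq_norm] at hs3
        linarith
      calc μ t ≤ μ (Metric.closedBall x (EMetric.diam t).toReal) := measure_mono hsub
        _ = ν (F ⁻¹' Metric.closedBall x (EMetric.diam t).toReal) :=
            Measure.map_apply hFms measurableSet_closedBall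
        _ ≤ ν (cyl N (n + 1) (fun i => σ₀ i)) := measure_mono hsub2
        _ = ((N : ℝ≥0∞) ^ (n + 1))⁻¹ := by rw [hνdef]; exact cyl_measure N (n + 1) _
  -- liminf extraction
  set L := Filter.atTop.liminf (fun n => (N : ℝ≥0∞) ^ n * ENNReal.ofReal (h (κ * R n))) with hLdef
  set ε₀ : ℝ≥0∞ := min L 1 / 2 with hε₀def
  have hminne : min L 1 ≠ 0 := ne_of_gt (lt_min hpos one_pos)
  have hmintop : min L 1 ≠ ∞ := ne_top_of_le_ne_top ENNReal.one_ne_top (min_le_right L 1)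
  have hε₀pos : 0 < ε₀ := ENNReal.half_pos hminne
  have hε₀top : ε₀ ≠ ∞ := (ENNReal.div_lt_top hmintop (by norm_num)).ne
  have hε₀lt : ε₀ < L := by
    rcases eq_or_ne L ∞ with hL1 | hL1
    · rw [hL1]; exact hε₀top.lt_top
    · calc ε₀ ≤ L / 2 := ENNReal.div_le_div_right (min_le_left L 1) 2
        _ < L := ENNReal.half_lt_self hpos.ne' hL1
  obtain ⟨n₀, hn₀⟩ := Filter.eventually_atTop.mp (Filter.eventually_lt_of_lt_liminf hε₀lt)
  -- constants
  have hNne : (N : ℝ≥0∞) ≠ 0 := by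
    simp only [ne_eq, Nat.cast_eq_zero]; omega
  have hNtop : (N : ℝ≥0∞) ≠ ∞ := ENNReal.natCast_ne_top N
  have hq1 : (N : ℝ≥0∞)⁻¹ < 1 := by
    rw [ENNReal.inv_lt_one]
    exact_mod_cast (by omega : 1 < N)
  have hx₀ : 0 < h (κ * R n₀) := by
    by_contra hcon
    push_neg at hcon
    have h2 := hn₀ n₀ le_rfl
    rw [ENNReal.ofReal_eq_zero.mpr hcon, mul_zero] at h2
    exact absurd h2 (by simp)
  have hc1 : 1 ≤ c := by
    have h1 := hdbl (κ * R n₀) (mul_pos hκpos (hRpos n₀))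
    have h2 : h (κ * R n₀) ≤ h (2 * (κ * R n₀)) :=
      hmono (by nlinarith [mul_pos hκpos (hRpos n₀)])
    nlinarith
  obtain ⟨k, hk⟩ := pow_unbounded_of_one_lt (κ / c₀) (one_lt_two (α := ℝ))
  have hkk : κ ≤ 2 ^ k * c₀ := by
    rw [div_lt_iff₀ hc₀pos] at hk; linarith
  set X : ℝ≥0∞ := ENNReal.ofReal (c ^ k) with hXdef
  have hX0 : X ≠ 0 := ne_of_gt (ENNReal.ofReal_pos.mpr (pow_pos (by linarith) k))
  have hXt : X ≠ ∞ := ENNReal.ofReal_ne_top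
  set a : ℝ≥0∞ := X⁻¹ * ε₀ * (N : ℝ≥0∞)⁻¹ with hadef
  have ha0 : a ≠ 0 := by
    rw [hadef]
    exact mul_ne_zero (mul_ne_zero (ENNReal.inv_ne_zero.mpr hXt) hε₀pos.ne')
      (ENNReal.inv_ne_zero.mpr hNtop)
  set ε' : ℝ≥0∞ := ENNReal.ofReal (c₀ * R (n₀ + 1)) with hε'def
  have hε'pos : 0 < ε' := ENNReal.ofReal_pos.mpr (mul_pos hc₀pos (hRpos _))
  -- main mass-distribution bound
  have hmain : ∀ t : Set (EuclideanSpace ℝ (Fin p)), EMetric.diam t ≤ ε' →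
      (a • μ) t ≤ ENNReal.ofReal (h (EMetric.diam t).toReal) := by
    intro t hdt
    rw [Measure.smul_apply, smul_eq_mul]
    by_cases hAll : ∀ n : ℕ, EMetric.diam t < ENNReal.ofReal (c₀ * R (n + 1))
    · have hμ0 : μ t = 0 := by
        have hb : ∀ n : ℕ, μ t ≤ ((N : ℝ≥0∞)⁻¹) ^ (n + 1) := fun n => by
          rw [← ENNReal.inv_pow]; exact hkey t n (hAll n)
        have htend : Filter.Tendsto (fun n : ℕ => ((N : ℝ≥0∞)⁻¹) ^ (n + 1))
            Filter.atTop (nhds 0) :=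
          (ENNReal.tendsto_pow_atTop_nhds_zero_of_lt_one hq1).comp
            (Filter.tendsto_add_atTop_nat 1)
        simpa using ge_of_tendsto' htend hb
      rw [hμ0, mul_zero]
      exact zero_le
    · push_neg at hAll
      have hex : ∃ n : ℕ, ENNReal.ofReal (c₀ * R (n + 1)) ≤ EMetric.diam t := hAll
      set n := Nat.find hex with hndef
      have hnspec : ENNReal.ofReal (c₀ * R (n + 1)) ≤ EMetric.diam t := Nat.find_spec hex
      have hε'top : ε' ≠ ∞ := ENNReal.ofReal_ne_top
      have hDne : EMetric.diam t ≠ ∞ := ne_top_of_le_ne_top hε'top hdt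
      have hD1 : c₀ * R (n + 1) ≤ (EMetric.diam t).toReal := by
        have := ENNReal.toReal_mono hDne hnspec
        rwa [ENNReal.toReal_ofReal (mul_pos hc₀pos (hRpos _)).le] at this
      have hD2 : (EMetric.diam t).toReal ≤ c₀ * R (n₀ + 1) := by
        have := ENNReal.toReal_mono hε'top hdt
        rwa [hε'def, ENNReal.toReal_ofReal (mul_pos hc₀pos (hRpos _)).le] at this
      have hnn₀ : n₀ ≤ n := by
        by_contra hcon
        push_neg at hcon
        have h1 : R (n₀ + 1) < R (n + 1) := hRanti (by omega)
        nlinarith [hc₀pos]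
      have hμt : μ t ≤ ((N : ℝ≥0∞) ^ n)⁻¹ := by
        rcases Nat.eq_zero_or_pos n with h0 | hposn
        · rw [h0, pow_zero, inv_one]
          calc μ t ≤ μ Set.univ := measure_mono (Set.subset_univ t)
            _ = ν (F ⁻¹' Set.univ) := Measure.map_apply hFms MeasurableSet.univ
            _ = 1 := by rw [Set.preimage_univ, hνdef, myHaar_univ]
        · obtain ⟨n', hn'⟩ : ∃ n', n = n' + 1 := ⟨n - 1, by omega⟩
          have hmin : ¬ ENNReal.ofReal (c₀ * R (n' + 1)) ≤ EMetric.diam t :=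
            Nat.find_min hex (by omega)
          rw [hn']
          exact hkey t n' (not_le.mp hmin)
      have hHbound : ε₀ * ((N : ℝ≥0∞)⁻¹) ^ (n + 1) ≤ X * ENNReal.ofReal (h (EMetric.diam t).toReal) := by
        have h1 : ε₀ ≤ (N : ℝ≥0∞) ^ (n + 1) * ENNReal.ofReal (h (κ * R (n + 1))) :=
          (hn₀ (n + 1) (by omega)).le
        have h2 : h (κ * R (n + 1)) ≤ c ^ k * h (EMetric.diam t).toReal := by
          have ha2 : κ * R (n + 1) ≤ 2 ^ k * (c₀ * R (n + 1)) := by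
            have := hRpos (n + 1); nlinarith [hkk]
          calc h (κ * R (n + 1)) ≤ h (2 ^ k * (c₀ * R (n + 1))) := hmono ha2
            _ ≤ c ^ k * h (c₀ * R (n + 1)) :=
                iter_dbl h c (by linarith) hdbl k _ (mul_pos hc₀pos (hRpos _))
            _ ≤ c ^ k * h (EMetric.diam t).toReal :=
                mul_le_mul_of_nonneg_left (hmono hD1) (pow_nonneg (by linarith) k)
        have h3 : ENNReal.ofReal (h (κ * R (n + 1))) ≤ X * ENNReal.ofReal (h (EMetric.diam t).toReal) := by
          rw [hXdef, ← ENNReal.ofReal_mul (pow_nonneg (by linarith : (0:ℝ) ≤ c) k)]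
          exact ENNReal.ofReal_le_ofReal h2
        calc ε₀ * ((N : ℝ≥0∞)⁻¹) ^ (n + 1)
            ≤ ((N : ℝ≥0∞) ^ (n + 1) * ENNReal.ofReal (h (κ * R (n + 1)))) *
              ((N : ℝ≥0∞)⁻¹) ^ (n + 1) := mul_le_mul_left h1 _
          _ = ENNReal.ofReal (h (κ * R (n + 1))) *
              (((N : ℝ≥0∞)) ^ (n + 1) * ((N : ℝ≥0∞)⁻¹) ^ (n + 1)) := by ring
          _ = ENNReal.ofReal (h (κ * R (n + 1))) := by
              rw [← mul_pow, ENNReal.mul_inv_cancel hNne hNtop, one_pow, mul_one]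
          _ ≤ X * ENNReal.ofReal (h (EMetric.diam t).toReal) := h3
      calc a * μ t ≤ a * ((N : ℝ≥0∞) ^ n)⁻¹ := mul_le_mul_right hμt a
        _ = X⁻¹ * (ε₀ * ((N : ℝ≥0∞)⁻¹) ^ (n + 1)) := by
            rw [hadef, ENNReal.inv_pow, pow_succ]; ring
        _ ≤ X⁻¹ * (X * ENNReal.ofReal (h (EMetric.diam t).toReal)) :=
            mul_le_mul_right hHbound _
        _ = ENNReal.ofReal (h (EMetric.diam t).toReal) := by
            rw [← mul_assoc, ENNReal.inv_mul_cancel hX0 hXt, one_mul]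
  -- conclude via the mass distribution principle
  have hle : a • μ ≤ Measure.mkMetric (fun r : ℝ≥0∞ => ENNReal.ofReal (h r.toReal)) :=
    Measure.le_mkMetric _ (a • μ) ε' hε'pos hmain
  have hfin := Measure.le_iff'.mp hle (Set.range F)
  rw [Measure.smul_apply, smul_eq_mul, hμrange, mul_one] at hfin
  exact lt_of_lt_of_le (pos_iff_ne_zero.mpr ha0) hfin
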